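/- Let n ≥ 1, z ∈ ℂ, and let (α_1, …, α_n) be an enumeration of the n distinct n-th roots of unity. Set d(z) = diag(1, z, z², …, z^{n−1}), Λ_{jk} = α_k^{j−1}, Λ_z = d(z)Λ, and J(z) = diag(α_1, …, α_n). Then J_z Λ_z = z Λ_z J(z). -/
import Mathlib


/-- with `d(z) = diag(1, z, …, z^{n-1})`, `Λ_{jk} = α_k^{j-1}`,
`Λ_z = d(z)Λ`, and `J(z) = diag(α_1, …, α_n)`, we have `J_z Λ_z = z Λ_z J(z)`. -/
theorem statement5 (n : ℕ) (hn : 1 ≤ n) (z : ℂ) (α : Fin n → ℂ)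
    (hinj : Function.Injective α) (hroot : ∀ k, α k ^ n = 1)
    (Jz : Matrix (Fin n) (Fin n) ℂ)
    (hJz : ∀ j k : Fin n, Jz j k =
      if (k : ℕ) = (j : ℕ) + 1 then 1
      else if (j : ℕ) = n - 1 ∧ (k : ℕ) = 0 then z ^ n else 0)
    (d Λ Λz J : Matrix (Fin n) (Fin n) ℂ)
    (hd : d = Matrix.diagonal fun j : Fin n => z ^ (j : ℕ))
    (hΛ : ∀ j k : Fin n, Λ j k = α k ^ (j : ℕ))
    (hΛz : Λz = d * Λ)
    (hJ : J = Matrix.diagonal α) :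
    Jz * Λz = z • (Λz * J) := by
  have hΛz' : ∀ i k : Fin n, Λz i k = z ^ (i : ℕ) * α k ^ (i : ℕ) := by
    intro i k
    rw [hΛz, hd, Matrix.diagonal_mul, hΛ]
  ext j k
  have hRHS : (z • (Λz * J)) j k = z * (z ^ (j : ℕ) * α k ^ (j : ℕ) * α k) := by
    simp [hJ, Matrix.mul_diagonal, hΛz']
  rw [hRHS, Matrix.mul_apply]
  by_cases hj : (j : ℕ) = n - 1
  · -- last row
    have i0 : Fin n := ⟨0, hn⟩
    rw [Finset.sum_eq_single (⟨0, hn⟩ : Fin n)]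
    · rw [hJz, hΛz']
      have h1 : ¬ ((0 : ℕ) = (j : ℕ) + 1) := by omega
      simp only [h1, if_false, hj, and_self, if_true, Fin.val_mk, pow_zero, mul_one]
      have hn1 : n - 1 + 1 = n := Nat.succ_pred_eq_of_pos hn
      have h2 : z * (z ^ (n - 1) * α k ^ (n - 1) * α k)
          = (z ^ (n - 1) * z) * (α k ^ (n - 1) * α k) := by ring
      rw [h2, ← pow_succ, ← pow_succ, hn1, hroot, mul_one, if_neg (show ¬(0:ℕ) = n by omega)]
    · intro i _ hi
      rw [hJz]
      have h1 : ¬ ((i : ℕ) = (j : ℕ) + 1) := by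
        have := i.isLt; omega
      have h2 : ¬ ((j : ℕ) = n - 1 ∧ (i : ℕ) = 0) := by
        rintro ⟨-, h⟩
        exact hi (Fin.ext h)
      simp [h1, h2]
    · intro h; exact absurd (Finset.mem_univ _) h
  · -- not last row
    have hjn : (j : ℕ) + 1 < n := by have := j.isLt; omega
    rw [Finset.sum_eq_single (⟨(j : ℕ) + 1, hjn⟩ : Fin n)]
    · rw [hJz, hΛz']
      simp only [Fin.val_mk, if_pos rfl, one_mul, if_true]
      rw [pow_succ, pow_succ]
      ring
    · intro i _ hi
      rw [hJz]
      have h1 : ¬ ((i : ℕ) = (j : ℕ) + 1) := by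
        intro h; exact hi (Fin.ext h)
      simp [h1, hj]
    · intro h; exact absurd (Finset.mem_univ _) h
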